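/- Let M ∈ (1/2)ℕ be positive, ε ∈ {0,1}, τ in the upper half-plane, and z ∈ ℂ. Then as a function of u, the Appell–Lerch sum F_{M,ε}(z,u;τ) is meromorphic with only simple poles, located exactly at u ∈ z + ℤτ + ℤ, and the residue of F_{M,ε}(z,·;τ) at u = z equals 1/(2πi). -/

import Mathlib

noncomputable section
open Complex Filter

/-- `e x = exp(2πix)` -/
def e (x : ℂ) : ℂ := Complex.exp (2 * Real.pi * Complex.I * x)

/-- The level `2M` Appell–Lerch sum. -/
def appell (M : ℝ) (ε : ℕ) (z u τ : ℂ) : ℂ :=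
  e (M * (z - u)) * ∑' n : ℤ,
    (-1 : ℂ) ^ (n * (ε : ℤ)) * e (-(u * (2 * M * n))) * e (τ * (M * n * (n + 1)))
      / (1 - e (τ * n) * e (z - u))

namespace AppellAux

lemma e_add (x y : ℂ) : e (x + y) = e x * e y := by
  rw [e, e, e, mul_add, Complex.exp_add]

lemma e_ne_zero (x : ℂ) : e x ≠ 0 := Complex.exp_ne_zero _

lemma e_zero : e 0 = 1 := by simp [e]

lemma norm_e (x : ℂ) : ‖e x‖ = Real.exp (-(2 * Real.pi * x.im)) := by
  rw [e, Complex.norm_exp]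
  congr 1
  simp [Complex.mul_re, Complex.mul_im]

lemma e_eq_one_iff (x : ℂ) : e x = 1 ↔ ∃ n : ℤ, x = n := by
  rw [e, Complex.exp_eq_one_iff]
  constructor
  · rintro ⟨n, hn⟩
    refine ⟨n, ?_⟩
    have h2 : (2 * (Real.pi : ℂ) * Complex.I) ≠ 0 := by
      simp [Real.pi_ne_zero, Complex.I_ne_zero]
    have hx : x * (2 * (Real.pi:ℂ) * Complex.I) = (n:ℂ) * (2 * (Real.pi:ℂ) * Complex.I) := by
      rw [mul_comm x _, hn]
    exact mul_right_cancel₀ h2 hx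
  · rintro ⟨n, rfl⟩
    exact ⟨n, by ring⟩

lemma e_int (n : ℤ) : e n = 1 := (e_eq_one_iff _).2 ⟨n, rfl⟩

lemma differentiable_e : Differentiable ℂ e := by
  apply Complex.differentiable_exp.comp
  exact (differentiable_id.const_mul _)

lemma hasDerivAt_e (c x : ℂ) :
    HasDerivAt (fun u => e (c - u)) (-(2 * Real.pi * Complex.I) * e (c - x)) x := by
  have h1 : HasDerivAt (fun u : ℂ => 2 * (Real.pi:ℂ) * Complex.I * (c - u))
      (-(2 * Real.pi * Complex.I)) x := by
    simpa using ((hasDerivAt_id x).const_sub c).const_mul (2 * (Real.pi:ℂ) * Complex.I)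
  simpa [e, mul_comm] using h1.cexp

end AppellAux

namespace AppellAux2
open AppellAux Metric

variable (M : ℝ) (ε : ℕ) (z τ : ℂ)

def den (n : ℤ) (u : ℂ) : ℂ := 1 - e (τ * n) * e (z - u)

def term (n : ℤ) (u : ℂ) : ℂ :=
  (-1 : ℂ) ^ (n * (ε : ℤ)) * e (-(u * (2 * M * n))) * e (τ * (M * n * (n + 1)))
      / (1 - e (τ * n) * e (z - u))

lemma term_eq (n : ℤ) (u : ℂ) :
    term M ε z τ n u =
      (-1 : ℂ) ^ (n * (ε : ℤ)) * e (-(u * (2 * M * n))) * e (τ * (M * n * (n + 1)))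
        / den z τ n u := rfl

lemma den_eq (n : ℤ) (u : ℂ) : den z τ n u = 1 - e (τ * n + (z - u)) := by
  rw [den, e_add]

lemma den_eq_zero_iff (n : ℤ) (u : ℂ) :
    den z τ n u = 0 ↔ ∃ m : ℤ, u = z + n * τ + m := by
  rw [den_eq, sub_eq_zero, eq_comm, e_eq_one_iff]
  constructor
  · rintro ⟨m, hm⟩
    refine ⟨-m, ?_⟩
    push_cast
    linear_combination -hm
  · rintro ⟨m, rfl⟩
    exact ⟨-m, by push_cast; ring⟩

lemma continuous_den (n : ℤ) : Continuous (fun u => den z τ n u) := by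
  unfold den
  exact continuous_const.sub (continuous_const.mul
    (differentiable_e.continuous.comp (continuous_const.sub continuous_id)))

lemma differentiable_den (n : ℤ) : Differentiable ℂ (fun u => den z τ n u) := by
  unfold den
  exact (differentiable_const _).sub ((differentiable_const _).mul
    (differentiable_e.comp ((differentiable_const z).sub differentiable_id)))

lemma norm_e_im (x : ℂ) : ‖e x‖ = Real.exp (-(2 * Real.pi * x.im)) := norm_e x

lemma im_aux (n : ℤ) (u : ℂ) :
    (τ * n + (z - u)).im = n * τ.im + (z.im - u.im) := by
  simp [Complex.add_im, Complex.sub_im, Complex.mul_im]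
  ring

/-- Denominator lower bound outside a finite middle range -/
lemma den_lb_out (hτ : 0 < τ.im) (u₀ : ℂ) (n : ℤ)
    (hn : n ∉ Finset.Icc ⌈(-2 - (z.im - u₀.im)) / τ.im⌉ ⌊(2 - (z.im - u₀.im)) / τ.im⌋)
    (u : ℂ) (hu : u ∈ closedBall u₀ 1) :
    (1 : ℝ) / 2 ≤ ‖den z τ n u‖ := by
  set s := z.im - u₀.im with hs
  set t := τ.im with ht
  have him : |u.im - u₀.im| ≤ 1 := by
    have h1 : |(u - u₀).im| ≤ ‖u - u₀‖ := Complex.abs_im_le_norm _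
    rw [Complex.sub_im] at h1
    calc |u.im - u₀.im| ≤ ‖u - u₀‖ := h1
      _ ≤ 1 := by rwa [Metric.mem_closedBall, Complex.dist_eq] at hu
  have hexp2 : (2 : ℝ) ≤ Real.exp 1 := by
    have := Real.add_one_le_exp (1 : ℝ)
    linarith
  have hw : (τ * n + (z - u)).im = n * t + (z.im - u.im) := im_aux z τ n u
  rw [Finset.mem_Icc, not_and_or] at hn
  push_neg at hn
  rw [den_eq]
  rcases hn with hn | hn
  · -- n < lo : big denominator
    have h1 : (n : ℝ) < (-2 - s) / t := by
      have h2 : (n : ℝ) ≤ ⌈(-2 - s) / t⌉ - 1 := by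
        have := hn
        exact_mod_cast by
          have : n ≤ ⌈(-2 - s) / t⌉ - 1 := by omega
          exact_mod_cast this
      have h3 : (⌈(-2 - s) / t⌉ : ℝ) < (-2 - s) / t + 1 := Int.ceil_lt_add_one _
      linarith
    have h4 : (n : ℝ) * t < -2 - s := by
      rw [lt_div_iff₀ hτ] at h1
      linarith
    have himw : (τ * n + (z - u)).im ≤ -1 := by
      rw [hw]
      have : z.im - u.im ≤ s + 1 := by
        have := abs_le.1 him
        simp only [hs]
        linarith [this.1]
      linarith
    have hnorm : (2 : ℝ) ≤ ‖e (τ * n + (z - u))‖ := by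
      rw [norm_e]
      calc (2:ℝ) ≤ Real.exp 1 := hexp2
        _ ≤ Real.exp (-(2 * Real.pi * (τ * n + (z - u)).im)) := by
            apply Real.exp_le_exp.2
            nlinarith [Real.pi_gt_three]
    calc (1:ℝ)/2 ≤ ‖e (τ * n + (z - u))‖ - ‖(1:ℂ)‖ := by
          rw [norm_one]; linarith
      _ ≤ ‖e (τ * n + (z - u)) - 1‖ := by
          have := norm_sub_norm_le (e (τ * n + (z - u))) (1:ℂ)
          linarith
      _ = ‖1 - e (τ * n + (z - u))‖ := by rw [norm_sub_rev]
  · -- n > hi : small e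
    have h1 : (2 - s) / t < (n : ℝ) := by
      have h2 : (⌊(2 - s) / t⌋ : ℝ) + 1 ≤ (n : ℝ) := by
        exact_mod_cast by
          have : ⌊(2 - s) / t⌋ + 1 ≤ n := by omega
          exact_mod_cast this
      have h3 : (2 - s) / t < (⌊(2 - s) / t⌋ : ℝ) + 1 := Int.lt_floor_add_one _
      linarith
    have h4 : 2 - s < (n : ℝ) * t := by
      rw [div_lt_iff₀ hτ] at h1
      linarith
    have himw : (1:ℝ) ≤ (τ * n + (z - u)).im := by
      rw [hw]
      have : s - 1 ≤ z.im - u.im := by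
        have := abs_le.1 him
        simp only [hs]
        linarith [this.2]
      linarith
    have hnorm : ‖e (τ * n + (z - u))‖ ≤ 1/2 := by
      rw [norm_e]
      have h5 : Real.exp (-(2 * Real.pi * (τ * n + (z - u)).im)) ≤ Real.exp (-1) := by
        apply Real.exp_le_exp.2
        nlinarith [Real.pi_gt_three]
      have h6 : Real.exp (-1) ≤ 1/2 := by
        rw [Real.exp_neg]
        rw [inv_le_comm₀ (Real.exp_pos 1) (by norm_num)]
        calc (1/2 : ℝ)⁻¹ = 2 := by norm_num
          _ ≤ Real.exp 1 := hexp2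
      linarith
    calc (1:ℝ)/2 ≤ ‖(1:ℂ)‖ - ‖e (τ * n + (z - u))‖ := by rw [norm_one]; linarith
      _ ≤ ‖1 - e (τ * n + (z - u))‖ := norm_sub_norm_le _ _

end AppellAux2

namespace AppellAux2
open AppellAux Metric Real

lemma norm_term_num (M : ℝ) (ε : ℕ) (τ : ℂ) (n : ℤ) (u : ℂ) :
    ‖(-1 : ℂ) ^ (n * (ε : ℤ)) * e (-(u * (2 * M * n))) * e (τ * (M * n * (n + 1)))‖
      = Real.exp (2 * Real.pi * (2 * M * n * u.im)) *
        Real.exp (-(2 * Real.pi * (τ.im * (M * n * (n + 1))))) := by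
  rw [norm_mul, norm_mul, norm_zpow]
  have h1 : ‖(-1 : ℂ)‖ = 1 := by simp
  rw [h1, one_zpow, one_mul]
  congr 1
  · rw [norm_e]
    congr 1
    have : (u * (2 * (M:ℂ) * (n:ℂ))).im = u.im * (2 * M * n) := by
      have h2 : (2 * (M:ℂ) * (n:ℂ)) = ((2 * M * n : ℝ) : ℂ) := by push_cast; ring
      rw [h2, Complex.mul_im]
      simp
    rw [Complex.neg_im, this]
    ring
  · rw [norm_e]
    congr 2
    have h2 : ((M:ℂ) * (n:ℂ) * ((n:ℂ) + 1)) = ((M * n * (n + 1) : ℝ) : ℂ) := by push_cast; ring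
    rw [h2, Complex.mul_im]
    simp

lemma summable_bound (M t C δ : ℝ) (hM : 0 < M) (ht : 0 < t) (hδ : 0 < δ) :
    Summable (fun n : ℤ =>
      (Real.exp (2 * Real.pi * (2 * M * C * |(n:ℝ)|)) *
        Real.exp (-(2 * Real.pi * (t * (M * n * (n + 1)))))) / δ) := by
  have hT2 : (0:ℝ) < 2 * M * t := by positivity
  have h3 : Summable (fun n : ℤ => (|n|^0 : ℝ) *
      Real.exp (-Real.pi * ((2*M*t) * n ^ 2 - 2 * (2*M*C + M*t) * |n|))) :=
    summable_pow_mul_jacobiTheta₂_term_bound (2*M*C + M*t) hT2 0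
  have h1 : ∀ n : ℤ, 0 ≤ (Real.exp (2 * Real.pi * (2 * M * C * |(n:ℝ)|)) *
      Real.exp (-(2 * Real.pi * (t * (M * n * (n + 1)))))) / δ := fun n => by positivity
  have h2 : ∀ n : ℤ, (Real.exp (2 * Real.pi * (2 * M * C * |(n:ℝ)|)) *
        Real.exp (-(2 * Real.pi * (t * (M * n * (n + 1)))))) / δ ≤
      (1/δ) * ((|n|^0 : ℝ) *
        Real.exp (-Real.pi * ((2*M*t) * n ^ 2 - 2 * (2*M*C + M*t) * |n|))) := by
    intro n
    rw [pow_zero, one_mul, div_eq_mul_inv, ← Real.exp_add, mul_comm, one_div]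
    apply mul_le_mul_of_nonneg_left _ (by positivity)
    apply Real.exp_le_exp.2
    push_cast
    have hkey : 0 ≤ 2 * Real.pi * M * t * (|(n:ℝ)| + n) :=
      mul_nonneg (by positivity) (by linarith [neg_abs_le (n:ℝ)])
    nlinarith [hkey]
  exact Summable.of_nonneg_of_le h1 h2 (h3.mul_left (1/δ))

lemma exists_pos_lb (T : Finset ℤ) (f : ℤ → ℝ) (hf : ∀ n ∈ T, 0 < f n) :
    ∃ δ : ℝ, 0 < δ ∧ δ ≤ 1/2 ∧ ∀ n ∈ T, δ ≤ f n := by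
  classical
  induction T using Finset.induction with
  | empty => exact ⟨1/2, by norm_num, le_refl _, by simp⟩
  | @insert a s ha ih =>
    obtain ⟨δ, hδ, hδh, hδf⟩ := ih (fun n hn => hf n (Finset.mem_insert_of_mem hn))
    refine ⟨min δ (f a), lt_min hδ (hf a (Finset.mem_insert_self _ _)),
      le_trans (min_le_left _ _) hδh, ?_⟩
    intro n hn
    rcases Finset.mem_insert.1 hn with rfl | hn
    · exact min_le_right _ _
    · exact le_trans (min_le_left _ _) (hδf n hn)

/-- The key local lemma: a radius on whose ball everything behaves. -/
lemma key (τ : ℂ) (hτ : 0 < τ.im) (z : ℂ) (M : ℝ) (hM : 0 < M) (ε : ℕ)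
    (u₀ : ℂ) (A : Finset ℤ)
    (hA : ∀ n : ℤ, n ∉ A → ∀ m : ℤ, u₀ ≠ z + n * τ + m) :
    ∃ r : ℝ, 0 < r ∧ r < 1 ∧
      (∀ n : ℤ, n ∉ A → ∀ u ∈ closedBall u₀ r, den z τ n u ≠ 0) ∧
      DifferentiableOn ℂ (fun u => ∑' n : ℤ, if n ∈ A then 0 else term M ε z τ n u)
        (ball u₀ r) ∧
      (∀ u ∈ closedBall u₀ r,
        Summable (fun n : ℤ => if n ∈ A then 0 else term M ε z τ n u)) := by
  classical
  set t := τ.im with ht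
  set s := z.im - u₀.im with hs
  set S : Finset ℤ := Finset.Icc ⌈(-2 - s) / t⌉ ⌊(2 - s) / t⌋ with hS
  set T : Finset ℤ := S \ A with hT
  have hden0 : ∀ n ∈ T, den z τ n u₀ ≠ 0 := by
    intro n hn h0
    obtain ⟨m, hm⟩ := (den_eq_zero_iff z τ n u₀).1 h0
    exact hA n (Finset.mem_sdiff.1 hn).2 m hm
  -- open neighborhood where middle denominators stay large
  set V : Set ℂ := ⋂ n ∈ T, {u | ‖den z τ n u₀‖ / 2 < ‖den z τ n u‖} with hV
  have hVopen : IsOpen V := by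
    apply isOpen_biInter_finset
    intro n _
    exact isOpen_lt continuous_const (continuous_den z τ n).norm
  have hVmem : u₀ ∈ V := by
    rw [hV]
    simp only [Set.mem_iInter, Set.mem_setOf_eq]
    intro n hn
    have := norm_pos_iff.2 (hden0 n hn)
    linarith
  obtain ⟨r', hr'pos, hr'sub⟩ := Metric.isOpen_iff.1 hVopen u₀ hVmem
  -- δ : uniform lower bound
  obtain ⟨δ, hδpos, hδ_half, hδT⟩ :=
    exists_pos_lb T (fun n => ‖den z τ n u₀‖ / 2)
      (fun n hn => by have := norm_pos_iff.2 (hden0 n hn); positivity)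
  -- the radius
  set r : ℝ := min r' 1 / 2 with hr
  have hrpos : 0 < r := by rw [hr]; positivity
  have hrlt1 : r < 1 := by
    rw [hr]
    have : min r' 1 ≤ 1 := min_le_right _ _
    linarith
  have hsub1 : closedBall u₀ r ⊆ closedBall u₀ 1 :=
    closedBall_subset_closedBall (by linarith)
  have hsubr' : closedBall u₀ r ⊆ ball u₀ r' := by
    apply closedBall_subset_ball
    rw [hr]
    have h1 : min r' 1 ≤ r' := min_le_left _ _
    have h2 : 0 < min r' 1 := lt_min hr'pos one_pos
    linarith
  -- uniform lower bound on denominators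
  have hlow : ∀ n : ℤ, n ∉ A → ∀ u ∈ closedBall u₀ r, δ ≤ ‖den z τ n u‖ := by
    intro n hnA u hu
    by_cases hnS : n ∈ S
    · have hnT : n ∈ T := Finset.mem_sdiff.2 ⟨hnS, hnA⟩
      have huV : u ∈ V := hr'sub (hsubr' hu)
      rw [hV] at huV
      simp only [Set.mem_iInter, Set.mem_setOf_eq] at huV
      have := huV n hnT
      have := hδT n hnT
      linarith
    · have := den_lb_out z τ hτ u₀ n hnS u (hsub1 hu)
      linarith
  have hne : ∀ n : ℤ, n ∉ A → ∀ u ∈ closedBall u₀ r, den z τ n u ≠ 0 := by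
    intro n hn u hu
    have := hlow n hn u hu
    intro h0
    rw [h0, norm_zero] at this
    linarith
  -- the summable bound
  set C : ℝ := |u₀.im| + 1 with hC
  set b : ℤ → ℝ := fun n =>
    (Real.exp (2 * Real.pi * (2 * M * C * |(n:ℝ)|)) *
      Real.exp (-(2 * Real.pi * (t * (M * n * (n + 1)))))) / δ with hb
  have hbnonneg : ∀ n, 0 ≤ b n := by
    intro n; simp only [hb]; positivity
  have hbsum : Summable b := by
    rw [hb, ht]
    exact summable_bound M τ.im C δ hM hτ hδpos
  -- the termwise bound
  have hboundA : ∀ (n : ℤ) (u : ℂ), u ∈ closedBall u₀ r →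
      ‖(if n ∈ A then 0 else term M ε z τ n u)‖ ≤ b n := by
    intro n u hu
    by_cases hn : n ∈ A
    · simp only [hn, if_true, norm_zero]
      exact hbnonneg n
    · simp only [hn, if_false]
      rw [term_eq, norm_div, norm_term_num, ← ht]
      have hden := hlow n hn u hu
      have huim : |u.im| ≤ C := by
        have h1 : |(u - u₀).im| ≤ ‖u - u₀‖ := Complex.abs_im_le_norm _
        rw [Complex.sub_im] at h1
        have h2 : ‖u - u₀‖ ≤ r := by
          rwa [Metric.mem_closedBall, Complex.dist_eq] at hu
        rw [hC]
        have := abs_sub_abs_le_abs_sub u.im u₀.im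
        have := abs_le.1 (le_trans h1 h2 : |u.im - u₀.im| ≤ r)
        have : |u.im| ≤ |u₀.im| + r := by
          have h3 := abs_sub_abs_le_abs_sub u.im u₀.im
          have h4 : |u.im - u₀.im| ≤ r := le_trans h1 h2
          linarith
        linarith
      have hnum_le : Real.exp (2 * Real.pi * (2 * M * n * u.im)) ≤
          Real.exp (2 * Real.pi * (2 * M * C * |(n:ℝ)|)) := by
        apply Real.exp_le_exp.2
        have h5 : (n:ℝ) * u.im ≤ |(n:ℝ)| * C := by
          calc (n:ℝ) * u.im ≤ |(n:ℝ) * u.im| := le_abs_self _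
            _ = |(n:ℝ)| * |u.im| := abs_mul _ _
            _ ≤ |(n:ℝ)| * C := by
                apply mul_le_mul_of_nonneg_left huim (abs_nonneg _)
        have h7 := mul_le_mul_of_nonneg_left h5
          (show (0:ℝ) ≤ 2 * Real.pi * (2 * M) by positivity)
        nlinarith [h7]
      have hd : δ ≤ ‖den z τ n u‖ := hlow n hn u hu
      have h6 : Real.exp (2 * Real.pi * (2 * M * (n:ℝ) * u.im)) *
            Real.exp (-(2 * Real.pi * (t * (M * n * (n + 1))))) ≤
          Real.exp (2 * Real.pi * (2 * M * C * |(n:ℝ)|)) *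
            Real.exp (-(2 * Real.pi * (t * (M * n * (n + 1))))) :=
        mul_le_mul_of_nonneg_right hnum_le (Real.exp_pos _).le
      calc Real.exp (2 * Real.pi * (2 * M * (n:ℝ) * u.im)) *
            Real.exp (-(2 * Real.pi * (t * (M * n * (n + 1))))) / ‖den z τ n u‖
          ≤ Real.exp (2 * Real.pi * (2 * M * (n:ℝ) * u.im)) *
            Real.exp (-(2 * Real.pi * (t * (M * n * (n + 1))))) / δ := by
            apply div_le_div_of_nonneg_left (by positivity) hδpos hd
        _ ≤ Real.exp (2 * Real.pi * (2 * M * C * |(n:ℝ)|)) *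
            Real.exp (-(2 * Real.pi * (t * (M * n * (n + 1))))) / δ := by
            exact (div_le_div_iff_of_pos_right hδpos).2 h6
        _ = b n := by simp only [hb]
  refine ⟨r, hrpos, hrlt1, hne, ?_, ?_⟩
  · apply differentiableOn_tsum_of_summable_norm hbsum ?_ isOpen_ball
      (fun n u hu => hboundA n u (ball_subset_closedBall hu))
    intro n
    by_cases hn : n ∈ A
    · simp only [hn, if_true]
      exact differentiableOn_const 0
    · simp only [hn, if_false, term_eq]
      apply DifferentiableOn.div
      · apply Differentiable.differentiableOn
        exact ((differentiable_const _).mul (differentiable_e.comp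
          ((differentiable_id.mul_const _).neg))).mul (differentiable_const _)
      · exact (differentiable_den z τ n).differentiableOn
      · exact fun u hu => hne n hn u (ball_subset_closedBall hu)
  · intro u hu
    exact Summable.of_norm_bounded hbsum (fun n => hboundA n u hu)

open Filter in
lemma appell_eq (M : ℝ) (ε : ℕ) (z u τ : ℂ) :
    appell M ε z u τ = e (M * (z - u)) * ∑' n : ℤ, term M ε z τ n u := rfl

lemma differentiable_prefactor (M : ℝ) (z : ℂ) :
    Differentiable ℂ (fun u : ℂ => e ((M:ℂ) * (z - u))) :=
  differentiable_e.comp (((differentiable_const z).sub differentiable_id).const_mul _)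

lemma two_pi_I_ne_zero : (2 * (Real.pi:ℂ) * Complex.I) ≠ 0 := by
  simp [Real.pi_ne_zero, Complex.I_ne_zero]

/-- The pole/residue lemma at `u₀ = z + aτ + b`. -/
lemma pole_tendsto (τ : ℂ) (hτ : 0 < τ.im) (z : ℂ) (M : ℝ) (hM : 0 < M) (ε : ℕ)
    (a b : ℤ) :
    Tendsto (fun v => (v - (z + a * τ + b)) * appell M ε z v τ)
      (nhdsWithin (z + a * τ + b) {z + a * τ + b}ᶜ)
      (nhds (e ((M:ℂ) * (z - (z + a * τ + b))) *
        ((-1:ℂ) ^ (a * (ε:ℤ)) * e (-((z + (a:ℂ) * τ + b) * (2 * M * a))) *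
          e (τ * ((M:ℂ) * a * (a + 1)))) / (2 * Real.pi * Complex.I))) := by
  classical
  set u₀ : ℂ := z + a * τ + b with hu₀
  have hA : ∀ n : ℤ, n ∉ ({a} : Finset ℤ) → ∀ m : ℤ, u₀ ≠ z + n * τ + m := by
    intro n hn m heq
    have h2 : z.im + (a:ℝ) * τ.im = z.im + (n:ℝ) * τ.im := by
      have := congrArg Complex.im heq
      simpa [hu₀, Complex.add_im, Complex.mul_im, Complex.intCast_re,
        Complex.intCast_im] using this
    have h3 : (a:ℝ) = (n:ℝ) := mul_right_cancel₀ (ne_of_gt hτ) (by linarith)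
    have h4 : a = n := by exact_mod_cast h3
    exact hn (by simp [h4])
  obtain ⟨r, hrpos, hrlt1, hne, hdiff, hsum⟩ := key τ hτ z M hM ε u₀ {a} hA
  set g : ℂ → ℂ :=
    fun u => ∑' n : ℤ, if n ∈ ({a} : Finset ℤ) then 0 else term M ε z τ n u with hg
  have hgc : ContinuousAt g u₀ :=
    (hdiff.differentiableAt (isOpen_ball.mem_nhds (mem_ball_self hrpos))).continuousAt
  -- the a-th denominator vanishes only at u₀ inside the ball
  have hdena : ∀ u ∈ ball u₀ r, u ≠ u₀ → den z τ a u ≠ 0 := by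
    intro u hu hne0 h0
    obtain ⟨m, hm⟩ := (den_eq_zero_iff z τ a u).1 h0
    have hdiffm : u - u₀ = ((m - b : ℤ) : ℂ) := by rw [hm, hu₀]; push_cast; ring
    have habs : ‖u - u₀‖ < 1 := by
      have := (mem_ball.1 hu)
      rw [Complex.dist_eq] at this
      linarith
    rw [hdiffm, Complex.norm_intCast] at habs
    have h5 : |m - b| < 1 := by exact_mod_cast habs
    have hmb : m = b := by rw [abs_lt] at h5; omega
    exact hne0 (by rw [hm, hmb])
  -- splitting identity
  have hfull : ∀ u, u ∈ ball u₀ r → u ≠ u₀ →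
      appell M ε z u τ = e ((M:ℂ) * (z - u)) * (term M ε z τ a u + g u) := by
    intro u hu hneu
    have hs1 := hsum u (ball_subset_closedBall hu)
    have hsupp : Summable (fun n : ℤ => if n = a then term M ε z τ n u else 0) := by
      apply summable_of_ne_finset_zero (s := {a})
      intro n hn
      simp only [Finset.mem_singleton] at hn
      simp [hn]
    have hS : Summable (fun n : ℤ => term M ε z τ n u) := by
      apply (hs1.add hsupp).congr
      intro n
      by_cases h : n = a <;> simp [h]
    rw [appell_eq, hS.tsum_eq_add_tsum_ite a]
    congr 2
    apply tsum_congr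
    intro n
    simp [Finset.mem_singleton]
  -- derivative of the denominator at u₀
  have hprod : e (τ * a) * e (z - u₀) = 1 := by
    rw [← e_add]
    have h6 : τ * a + (z - u₀) = ((-b : ℤ) : ℂ) := by rw [hu₀]; push_cast; ring
    rw [h6, e_int]
  have hden_der : HasDerivAt (fun u => den z τ a u) (2 * Real.pi * Complex.I) u₀ := by
    have h1 := (hasDerivAt_e z u₀).const_mul (e (τ * a))
    have h2 := h1.const_sub 1
    have h7 : -(e (τ * (a:ℂ)) * (-(2 * Real.pi * Complex.I) * e (z - u₀)))
        = 2 * Real.pi * Complex.I := by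
      have : -(e (τ * (a:ℂ)) * (-(2 * Real.pi * Complex.I) * e (z - u₀)))
          = 2 * Real.pi * Complex.I * (e (τ * a) * e (z - u₀)) := by ring
      rw [this, hprod, mul_one]
    rw [← h7]
    exact h2
  have hden_u₀ : den z τ a u₀ = 0 := by rw [den, hprod, sub_self]
  have hslope := hasDerivAt_iff_tendsto_slope.1 hden_der
  have hinv := hslope.inv₀ two_pi_I_ne_zero
  -- limit of (u - u₀) * term a u
  have hterm_t : Tendsto (fun u => (u - u₀) * term M ε z τ a u) (nhdsWithin u₀ {u₀}ᶜ)
      (nhds (((-1:ℂ) ^ (a * (ε:ℤ)) * e (-(u₀ * (2 * M * a))) *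
        e (τ * ((M:ℂ) * a * (a + 1)))) * (2 * Real.pi * Complex.I)⁻¹)) := by
    have hnumc : ContinuousAt
        (fun u : ℂ => (-1:ℂ) ^ (a * (ε:ℤ)) * e (-(u * (2 * M * a))) *
          e (τ * ((M:ℂ) * a * (a + 1)))) u₀ := by
      apply Continuous.continuousAt
      exact ((continuous_const.mul (differentiable_e.continuous.comp
        ((continuous_id.mul continuous_const).neg))).mul continuous_const)
    have heq : ∀ u : ℂ, (u - u₀) * term M ε z τ a u =
        ((-1:ℂ) ^ (a * (ε:ℤ)) * e (-(u * (2 * M * a))) *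
          e (τ * ((M:ℂ) * a * (a + 1)))) * (slope (fun v => den z τ a v) u₀ u)⁻¹ := by
      intro u
      rw [slope_def_field, hden_u₀, sub_zero, inv_div, term_eq, div_eq_mul_inv,
        div_eq_mul_inv]
      ring
    have h8 := (hnumc.tendsto.mono_left nhdsWithin_le_nhds).mul hinv
    exact Tendsto.congr (fun u => (heq u).symm) h8
  have hlin : Tendsto (fun u : ℂ => u - u₀) (nhdsWithin u₀ {u₀}ᶜ) (nhds 0) := by
    have h9 : ContinuousAt (fun u : ℂ => u - u₀) u₀ :=
      (continuous_id.sub continuous_const).continuousAt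
    have h10 : Tendsto (fun u : ℂ => u - u₀) (nhdsWithin u₀ {u₀}ᶜ) (nhds (u₀ - u₀)) :=
      (h9.tendsto).mono_left nhdsWithin_le_nhds
    simpa using h10
  have hg_t : Tendsto (fun u => (u - u₀) * g u) (nhdsWithin u₀ {u₀}ᶜ) (nhds 0) := by
    have := hlin.mul (hgc.tendsto.mono_left nhdsWithin_le_nhds)
    simpa using this
  have hpre : Tendsto (fun u => e ((M:ℂ) * (z - u))) (nhdsWithin u₀ {u₀}ᶜ)
      (nhds (e ((M:ℂ) * (z - u₀)))) :=
    (((differentiable_prefactor M z).continuous.tendsto u₀).mono_left nhdsWithin_le_nhds)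
  have htotal := hpre.mul (hterm_t.add hg_t)
  have hev : ∀ᶠ u in nhdsWithin u₀ {u₀}ᶜ,
      e ((M:ℂ) * (z - u)) * ((u - u₀) * term M ε z τ a u + (u - u₀) * g u) =
        (u - u₀) * appell M ε z u τ := by
    have hball : ∀ᶠ u in nhdsWithin u₀ {u₀}ᶜ, u ∈ ball u₀ r :=
      (isOpen_ball.eventually_mem (mem_ball_self hrpos)).filter_mono nhdsWithin_le_nhds
    have hneq : ∀ᶠ u in nhdsWithin u₀ {u₀}ᶜ, u ≠ u₀ := by
      filter_upwards [self_mem_nhdsWithin] with u hu using hu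
    filter_upwards [hball, hneq] with u hu1 hu2
    rw [hfull u hu1 hu2]
    ring
  have hfinal := htotal.congr' hev
  have hval : e ((M:ℂ) * (z - u₀)) *
      (((-1:ℂ) ^ (a * (ε:ℤ)) * e (-(u₀ * (2 * M * a))) *
        e (τ * ((M:ℂ) * a * (a + 1)))) * (2 * Real.pi * Complex.I)⁻¹ + 0) =
      e ((M:ℂ) * (z - u₀)) *
        ((-1:ℂ) ^ (a * (ε:ℤ)) * e (-(u₀ * (2 * M * a))) *
          e (τ * ((M:ℂ) * a * (a + 1)))) / (2 * Real.pi * Complex.I) := by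
    rw [add_zero, div_eq_mul_inv]
    ring
  rw [hval] at hfinal
  exact hfinal

end AppellAux2

/-- As a function of `u`, the Appell–Lerch sum is meromorphic with only simple poles,
located exactly at `u ∈ z + ℤτ + ℤ`, and its residue at `u = z` is `1/(2πi)`. -/
theorem appell_poles_and_residue
    (τ : ℂ) (hτ : 0 < τ.im) (z : ℂ)
    (M : ℝ) (hM : 0 < M) (hM2 : ∃ k : ℕ, M = (k : ℝ) / 2)
    (ε : ℕ) (hε : ε = 0 ∨ ε = 1) :
    -- holomorphic away from `z + ℤτ + ℤ`
    (∀ u : ℂ, (∀ a b : ℤ, u ≠ z + a * τ + b) →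
        DifferentiableAt ℂ (fun v => appell M ε z v τ) u) ∧
    -- a simple pole at each point of `z + ℤτ + ℤ`
    (∀ a b : ℤ, ∃ c : ℂ, c ≠ 0 ∧
        Tendsto (fun v => (v - (z + a * τ + b)) * appell M ε z v τ)
          (nhdsWithin (z + a * τ + b) {z + a * τ + b}ᶜ) (nhds c)) ∧
    -- the residue at `u = z` equals `1/(2πi)`
    Tendsto (fun v => (v - z) * appell M ε z v τ)
      (nhdsWithin z {z}ᶜ) (nhds (1 / (2 * Real.pi * Complex.I))) := by
  refine ⟨?_, ?_, ?_⟩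
  · -- part 1 : holomorphy away from the poles
    intro u hu
    have hA : ∀ n : ℤ, n ∉ (∅ : Finset ℤ) → ∀ m : ℤ, u ≠ z + n * τ + m :=
      fun n _ m => hu n m
    obtain ⟨r, hrpos, hrlt1, hne, hdiff, hsum⟩ := AppellAux2.key τ hτ z M hM ε u ∅ hA
    have hdiff' : DifferentiableOn ℂ (fun v => ∑' n : ℤ, AppellAux2.term M ε z τ n v)
        (Metric.ball u r) := by
      have heq : (fun v => ∑' n : ℤ, if n ∈ (∅ : Finset ℤ) then 0
          else AppellAux2.term M ε z τ n v)
          = (fun v => ∑' n : ℤ, AppellAux2.term M ε z τ n v) := by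
        funext v
        apply tsum_congr
        intro n
        simp
      rwa [heq] at hdiff
    have h1 : DifferentiableAt ℂ (fun v => ∑' n : ℤ, AppellAux2.term M ε z τ n v) u :=
      hdiff'.differentiableAt (Metric.isOpen_ball.mem_nhds (Metric.mem_ball_self hrpos))
    have h2 : DifferentiableAt ℂ (fun v => e ((M:ℂ) * (z - v))) u :=
      (AppellAux2.differentiable_prefactor M z).differentiableAt
    exact h2.mul h1
  · -- part 2 : simple poles
    intro a b
    refine ⟨_, ?_, AppellAux2.pole_tendsto τ hτ z M hM ε a b⟩
    apply div_ne_zero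
    · exact mul_ne_zero (AppellAux.e_ne_zero _)
        (mul_ne_zero (mul_ne_zero (zpow_ne_zero _ (by norm_num))
          (AppellAux.e_ne_zero _)) (AppellAux.e_ne_zero _))
    · exact AppellAux2.two_pi_I_ne_zero
  · -- part 3 : the residue at z
    have h := AppellAux2.pole_tendsto τ hτ z M hM ε 0 0
    simpa [AppellAux.e_zero] using h
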